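/- Let n ≥ 2 and u ∈ ℂ, and set w_{(n)} = s_1 s_2 ⋯ s_{n−1} ∈ S_n ⊆ ℌ_A. For every subset I ⊆ {1,…,n} with |I| even, there exists ε ∈ {1, −1} such that w_{(n)} c_I − ε w_{(n)} ∈ [ℌ_A, ℌ_A]. -/

import Mathlib

open scoped BigOperators

namespace DAHCA

/-- Generators of the degenerate affine Hecke-Clifford algebra of type `A_{n-1}`. -/
inductive Gen (n : ℕ) : Type
  | x : Fin n → Gen n
  | c : Fin n → Gen n
  | w : Equiv.Perm (Fin n) → Gen n

noncomputable def X (n : ℕ) (i : Fin n) : FreeAlgebra ℂ (Gen n) := FreeAlgebra.ι ℂ (Gen.x i)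
noncomputable def C (n : ℕ) (i : Fin n) : FreeAlgebra ℂ (Gen n) := FreeAlgebra.ι ℂ (Gen.c i)
noncomputable def W (n : ℕ) (σ : Equiv.Perm (Fin n)) : FreeAlgebra ℂ (Gen n) :=
  FreeAlgebra.ι ℂ (Gen.w σ)

/-- The simple transposition `s_{i+1} = (i, i+1)` (0-indexed). -/
def sA (n : ℕ) (i : ℕ) (h : i + 1 < n) : Equiv.Perm (Fin n) :=
  Equiv.swap ⟨i, Nat.lt_of_succ_lt h⟩ ⟨i + 1, h⟩

/-- The defining relations of the degenerate affine Hecke-Clifford algebra of type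
`A_{n-1}` with parameter `u`. -/
inductive Rel (n : ℕ) (u : ℂ) : FreeAlgebra ℂ (Gen n) → FreeAlgebra ℂ (Gen n) → Prop
  | xx (i j : Fin n) : Rel n u (X n i * X n j) (X n j * X n i)
  | csq (i : Fin n) : Rel n u (C n i * C n i) 1
  | cc (i j : Fin n) (hij : i ≠ j) : Rel n u (C n i * C n j) (-(C n j * C n i))
  | ww (σ τ : Equiv.Perm (Fin n)) : Rel n u (W n σ * W n τ) (W n (σ * τ))
  | wone : Rel n u (W n 1) 1
  | xc (i : Fin n) : Rel n u (X n i * C n i) (-(C n i * X n i))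
  | xc' (i j : Fin n) (hij : i ≠ j) : Rel n u (X n i * C n j) (C n j * X n i)
  | wc (σ : Equiv.Perm (Fin n)) (i : Fin n) : Rel n u (W n σ * C n i) (C n (σ i) * W n σ)
  | cross (i : ℕ) (h : i + 1 < n) :
      Rel n u (X n ⟨i + 1, h⟩ * W n (sA n i h) - W n (sA n i h) * X n ⟨i, Nat.lt_of_succ_lt h⟩)
        (u • (1 - C n ⟨i + 1, h⟩ * C n ⟨i, Nat.lt_of_succ_lt h⟩))
  | xw (i : ℕ) (h : i + 1 < n) (j : Fin n) (h1 : (j : ℕ) ≠ i) (h2 : (j : ℕ) ≠ i + 1) :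
      Rel n u (X n j * W n (sA n i h)) (W n (sA n i h) * X n j)

/-- The degenerate affine Hecke-Clifford algebra of type `A_{n-1}` with parameter `u`. -/
abbrev HA (n : ℕ) (u : ℂ) := RingQuot (Rel n u)

noncomputable def xH (n : ℕ) (u : ℂ) (i : Fin n) : HA n u :=
  RingQuot.mkAlgHom ℂ (Rel n u) (X n i)
noncomputable def cH (n : ℕ) (u : ℂ) (i : Fin n) : HA n u :=
  RingQuot.mkAlgHom ℂ (Rel n u) (C n i)
noncomputable def wH (n : ℕ) (u : ℂ) (σ : Equiv.Perm (Fin n)) : HA n u :=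
  RingQuot.mkAlgHom ℂ (Rel n u) (W n σ)

/-- The linear span of all commutators in an algebra `A`; the cocenter is `A` modulo
this subspace. -/
def commSpan (A : Type*) [Ring A] [Algebra ℂ A] : Submodule ℂ A :=
  Submodule.span ℂ {z : A | ∃ a b : A, z = a * b - b * a}

/-- The ordered product `c_{i_1} c_{i_2} ⋯ c_{i_m}` over `I = {i_1 < i_2 < ⋯ < i_m}`. -/
noncomputable def cProd (n : ℕ) (u : ℂ) (I : Finset (Fin n)) : HA n u :=
  ((I.sort (· ≤ ·)).map (cH n u)).prod

/-- The cycle `(a, a+1, …, b-1)` expressed as the product of the simple transpositions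
`s_{a+1} s_{a+2} ⋯ s_{b-1}` (1-indexed), i.e. `(a,a+1)(a+1,a+2)⋯(b-2,b-1)` (0-indexed). -/
def wSeg (n : ℕ) (a b : ℕ) : Equiv.Perm (Fin n) :=
  ((List.range (b - a - 1)).map fun j =>
    if h : a + j + 1 < n then sA n (a + j) h else 1).prod

end DAHCA

namespace DAHCA
variable {n : ℕ} {u : ℂ}
open Fin.NatCast Fin.CommRing

lemma hneg_mul (a b : HA n u) : (-a) * b = -(a * b) := neg_mul a b
lemma hmul_neg (a b : HA n u) : a * (-b) = -(a * b) := mul_neg a b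
lemma hneg_smul (e : ℂ) (a : HA n u) : (-e) • a = -(e • a) := neg_smul e a
lemma hneg_neg (a : HA n u) : -(-a) = a := neg_neg a

lemma c_sq (i : Fin n) : cH n u i * cH n u i = 1 := by
  have := RingQuot.mkAlgHom_rel ℂ (Rel.csq (n := n) (u := u) i)
  simpa [cH, map_mul, map_one] using this

lemma c_anti {i j : Fin n} (hij : i ≠ j) :
    cH n u i * cH n u j = -(cH n u j * cH n u i) := by
  have := RingQuot.mkAlgHom_rel ℂ (Rel.cc (n := n) (u := u) i j hij)
  simpa [cH, map_mul, map_neg] using this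

lemma w_c (σ : Equiv.Perm (Fin n)) (i : Fin n) :
    wH n u σ * cH n u i = cH n u (σ i) * wH n u σ := by
  have := RingQuot.mkAlgHom_rel ℂ (Rel.wc (n := n) (u := u) σ i)
  simpa [cH, wH, map_mul] using this


/-- Product of `c` generators over a list. -/
noncomputable def cL (n : ℕ) (u : ℂ) (L : List (Fin n)) : HA n u :=
  (L.map (cH n u)).prod

lemma cL_nil : cL n u [] = 1 := rfl

lemma cL_cons (i : Fin n) (M : List (Fin n)) :
    cL n u (i :: M) = cH n u i * cL n u M := by
  simp [cL]

/-- A sign for commuting a single `c` past the product over a list. -/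
lemma c_pass (k : Fin n) (M : List (Fin n)) :
    ∃ ε : ℂ, (ε = 1 ∨ ε = -1) ∧ cH n u k * cL n u M = ε • (cL n u M * cH n u k) := by
  induction M with
  | nil => exact ⟨1, Or.inl rfl, by simp [cL_nil]⟩
  | cons j M ih =>
    obtain ⟨ε, hε, h⟩ := ih
    by_cases hkj : k = j
    · subst hkj
      refine ⟨ε, hε, ?_⟩
      rw [cL_cons, ← mul_assoc, c_sq, one_mul]
      calc cL n u M = 1 * cL n u M := (one_mul _).symm
        _ = (cH n u k * cH n u k) * cL n u M := by rw [c_sq]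
        _ = cH n u k * (cH n u k * cL n u M) := by rw [mul_assoc]
        _ = cH n u k * (ε • (cL n u M * cH n u k)) := by rw [h]
        _ = ε • (cH n u k * (cL n u M * cH n u k)) := (mul_smul_comm _ _ _)
        _ = ε • (cH n u k * cL n u M * cH n u k) := by rw [mul_assoc]
    · refine ⟨-ε, by rcases hε with h1 | h1 <;> simp [h1], ?_⟩
      rw [cL_cons, ← mul_assoc, c_anti hkj]
      calc -(cH n u j * cH n u k) * cL n u M
          = -(cH n u j * (cH n u k * cL n u M)) := by rw [hneg_mul, mul_assoc]
        _ = -(cH n u j * (ε • (cL n u M * cH n u k))) := by rw [h]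
        _ = -(ε • (cH n u j * (cL n u M * cH n u k))) := by rw [mul_smul_comm]
        _ = (-ε) • (cH n u j * (cL n u M * cH n u k)) := (hneg_smul _ _).symm
        _ = (-ε) • (cH n u j * cL n u M * cH n u k) := by rw [mul_assoc]

lemma cL_pass_w (σ : Equiv.Perm (Fin n)) (M : List (Fin n)) :
    cL n u M * wH n u σ = wH n u σ * cL n u (M.map σ.symm) := by
  induction M with
  | nil => simp [cL_nil]
  | cons j M ih =>
    rw [cL_cons, List.map_cons, cL_cons, mul_assoc, ih, ← mul_assoc, ← mul_assoc]
    congr 1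
    have := w_c (u := u) σ (σ.symm j)
    rw [Equiv.apply_symm_apply] at this
    exact this.symm

/-- Quotient map to the cocenter. -/
noncomputable abbrev qk (n : ℕ) (u : ℂ) (a : HA n u) : HA n u ⧸ commSpan (HA n u) :=
  Submodule.Quotient.mk a

lemma qk_mul_comm (a b : HA n u) : qk n u (a * b) = qk n u (b * a) := by
  rw [Submodule.Quotient.eq]
  exact Submodule.subset_span ⟨a, b, rfl⟩

lemma qk_smul (e : ℂ) (a : HA n u) : qk n u (e • a) = e • qk n u a := rfl

lemma qk_conj (k : Fin n) (y : HA n u) :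
    qk n u (cH n u k * y * cH n u k) = qk n u y := by
  have h1 : qk n u (cH n u k * (y * cH n u k)) = qk n u ((y * cH n u k) * cH n u k) :=
    qk_mul_comm _ _
  rw [← mul_assoc] at h1
  rw [h1, mul_assoc, c_sq, mul_one]

/-- Step: replace the first index `σ i` of the list by `i`, modulo commutators,
up to sign. -/
lemma step (σ : Equiv.Perm (Fin n)) (i : Fin n) (M : List (Fin n)) :
    ∃ ε : ℂ, (ε = 1 ∨ ε = -1) ∧
      qk n u (wH n u σ * cL n u (σ i :: M)) = ε • qk n u (wH n u σ * cL n u (i :: M)) := by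
  obtain ⟨ε, hε, hpass⟩ := c_pass (u := u) (σ i) M
  refine ⟨ε, hε, ?_⟩
  have key : cH n u (σ i) * (wH n u σ * cL n u (σ i :: M)) * cH n u (σ i)
      = ε • (wH n u σ * cL n u (i :: M)) := by
    rw [cL_cons, cL_cons]
    calc cH n u (σ i) * (wH n u σ * (cH n u (σ i) * cL n u M)) * cH n u (σ i)
        = (cH n u (σ i) * wH n u σ) * (cH n u (σ i) * cL n u M) * cH n u (σ i) := by
          rw [mul_assoc (cH n u (σ i)) (wH n u σ)]
      _ = (wH n u σ * cH n u i) * (cH n u (σ i) * cL n u M) * cH n u (σ i) := by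
          rw [← w_c]
      _ = (wH n u σ * cH n u i) * (ε • (cL n u M * cH n u (σ i))) * cH n u (σ i) := by
          rw [hpass]
      _ = ε • ((wH n u σ * cH n u i) * (cL n u M * cH n u (σ i)) * cH n u (σ i)) := by
          rw [mul_smul_comm, smul_mul_assoc]
      _ = ε • ((wH n u σ * cH n u i) * (cL n u M * (cH n u (σ i) * cH n u (σ i)))) := by
          rw [mul_assoc, mul_assoc (cL n u M)]
      _ = ε • (wH n u σ * (cH n u i * cL n u M)) := by
          rw [c_sq, mul_one, mul_assoc]
  rw [← qk_conj (σ i) (wH n u σ * cL n u (σ i :: M)), key, qk_smul]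

/-- Iterated step. -/
lemma iter_step (σ : Equiv.Perm (Fin n)) (m : ℕ) (i : Fin n) (M : List (Fin n)) :
    ∃ ε : ℂ, (ε = 1 ∨ ε = -1) ∧
      qk n u (wH n u σ * cL n u ((σ ^ m) i :: M)) = ε • qk n u (wH n u σ * cL n u (i :: M)) := by
  induction m with
  | zero => exact ⟨1, Or.inl rfl, by simp⟩
  | succ m ih =>
    obtain ⟨ε, hε, h⟩ := ih
    obtain ⟨ε', hε', h'⟩ := step (u := u) σ ((σ ^ m) i) M
    refine ⟨ε' * ε, ?_, ?_⟩
    · rcases hε with h1 | h1 <;> rcases hε' with h2 | h2 <;> simp [h1, h2]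
    · have hp : (σ ^ (m + 1)) i = σ ((σ ^ m) i) := by
        rw [pow_succ', Equiv.Perm.mul_apply]
      rw [hp, h', h, smul_smul]

lemma partial_apply (n : ℕ) : ∀ (m : ℕ), m < n → ∀ x : Fin n,
    ((((List.range m).map fun j => if h : 0 + j + 1 < n then sA n (0 + j) h else 1).prod) x).val
      = if x.val < m then x.val + 1 else if x.val = m then 0 else x.val := by
  intro m
  induction m with
  | zero =>
    intro hm x
    simp only [List.range_zero, List.map_nil, List.prod_nil, Equiv.Perm.one_apply]
    split
    · omega
    · split
      · omega
      · rfl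
  | succ m ih =>
    intro hm x
    rw [List.range_succ, List.map_append, List.prod_append]
    simp only [List.map_cons, List.map_nil, List.prod_cons, List.prod_nil, mul_one]
    have hm' : 0 + m + 1 < n := by omega
    rw [dif_pos hm']
    rw [Equiv.Perm.mul_apply]
    have hswap : ((sA n (0 + m) hm') x).val =
        if x.val = m then m + 1 else if x.val = m + 1 then m else x.val := by
      simp only [sA, Equiv.swap_apply_def, Fin.ext_iff, apply_ite (Fin.val)]
      split_ifs <;> omega
    have := ih (by omega) ((sA n (0 + m) hm') x)
    rw [this, hswap]
    split_ifs <;> omega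

lemma wSeg_apply_val (n : ℕ) (hn : 2 ≤ n) (x : Fin n) :
    ((wSeg n 0 n) x).val = (x.val + 1) % n := by
  unfold wSeg
  have h0 : n - 0 - 1 = n - 1 := by omega
  rw [h0, partial_apply n (n-1) (by omega) x]
  have hx := x.isLt
  split
  · rw [Nat.mod_eq_of_lt (by omega)]
  · split
    · next h =>
      have h1 : x.val + 1 = n := by omega
      rw [h1, Nat.mod_self]
    · omega

lemma wSeg_apply (n : ℕ) (hn : 2 ≤ n) [NeZero n] (x : Fin n) :
    (wSeg n 0 n) x = x + 1 := by
  apply Fin.ext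
  rw [wSeg_apply_val n hn x, Fin.add_def, Fin.val_one']
  congr 1
  rw [Nat.mod_eq_of_lt (by omega : 1 < n)]

lemma wSeg_pow_apply (n : ℕ) (hn : 2 ≤ n) [NeZero n] (m : ℕ) (x : Fin n) :
    ((wSeg n 0 n) ^ m) x = x + (m : Fin n) := by
  induction m with
  | zero => simp
  | succ m ih =>
    rw [pow_succ', Equiv.Perm.mul_apply, ih, wSeg_apply n hn]
    push_cast
    ring


lemma main_even (hn : 2 ≤ n) : ∀ N : ℕ, ∀ L : List (Fin n), L.length = N → Even N →
    ∃ ε : ℂ, (ε = 1 ∨ ε = -1) ∧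
      qk n u (wH n u (wSeg n 0 n) * cL n u L) = ε • qk n u (wH n u (wSeg n 0 n)) := by
  haveI : NeZero n := ⟨by omega⟩
  intro N
  induction N using Nat.strong_induction_on with
  | _ N ih =>
    intro L hlen hev
    match L with
    | [] =>
      refine ⟨1, Or.inl rfl, ?_⟩
      rw [cL_nil, mul_one, one_smul]
    | [i] =>
      exfalso
      simp only [List.length_singleton] at hlen
      rw [← hlen, Nat.even_iff] at hev
      omega
    | i :: j :: M =>
      have hm : ((wSeg n 0 n) ^ ((i - j).val)) j = i := by
        rw [wSeg_pow_apply n hn, Fin.cast_val_eq_self, add_comm, sub_add_cancel]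
      obtain ⟨ε1, hε1, h1⟩ := iter_step (u := u) (wSeg n 0 n) ((i - j).val) j (j :: M)
      rw [hm] at h1
      have hcancel : cL n u (j :: j :: M) = cL n u M := by
        rw [cL_cons, cL_cons, ← mul_assoc, c_sq, one_mul]
      rw [hcancel] at h1
      have hlen2 : N = M.length + 2 := by
        simp only [List.length_cons] at hlen; omega
      have hevM : Even M.length := by
        rw [Nat.even_iff] at hev ⊢; omega
      obtain ⟨ε2, hε2, h2⟩ := ih M.length (by omega) M rfl hevM
      refine ⟨ε1 * ε2, ?_, ?_⟩
      · rcases hε1 with h | h <;> rcases hε2 with h' | h' <;> simp [h, h']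
      · rw [h1, h2, smul_smul]

end DAHCA
namespace DAHCA

/-- With `w_{(n)} = s_1 s_2 ⋯ s_{n-1}`, for every subset
`I ⊆ {1, …, n}` of even cardinality there is a sign `ε` such that
`w_{(n)} c_I ≡ ε w_{(n)}` modulo commutators. -/
theorem wCirc_cliffordProd_reduction (n : ℕ) (hn : 2 ≤ n) (u : ℂ)
    (I : Finset (Fin n)) (hI : Even I.card) :
    ∃ ε : ℂ, (ε = 1 ∨ ε = -1) ∧
      wH n u (wSeg n 0 n) * cProd n u I - ε • wH n u (wSeg n 0 n) ∈ commSpan (HA n u) := by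
  have hc : cProd n u I = cL n u (I.sort (· ≤ ·)) := rfl
  obtain ⟨ε, hε, h⟩ := main_even (u := u) hn I.card (I.sort (· ≤ ·)) (Finset.length_sort _) hI
  refine ⟨ε, hε, ?_⟩
  rw [← Submodule.Quotient.eq]
  rw [hc]
  rw [show (Submodule.Quotient.mk (ε • wH n u (wSeg n 0 n)) : HA n u ⧸ commSpan (HA n u))
      = ε • Submodule.Quotient.mk (wH n u (wSeg n 0 n)) from rfl]
  exact h

end DAHCA
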